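/- Let G be a graph, S a finite subgraph of G, and o a vertex. For Bernoulli bond percolation with parameter p, the probability that the cluster of o equals S is P(p) = p^{|E(S)|} (1-p)^{|∂S|}, where ∂S is the set of edges of G incident with S but not in E(S). This polynomial, viewed as an entire function P(z) on ℂ, satisfies |P(z)| ≤ ((1-x+M)/(1-x-M))^{|∂S|} · P(x+M) for every M > 0 and 0 ≤ x < 1 with x+M < 1, and every z in the closed disk D(x,M). -/

import Mathlib

open scoped Classical

/-- For Bernoulli bond percolation on a graph `G` with a finite subgraph `S`
containing the vertex `o`, the probability of the event `{C(o) = S}` is the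
polynomial `P(p) = p^{|E(S)|} (1-p)^{|∂S|}`, where `∂S` is the set of edges of
`G` incident with `S` but not belonging to `S`.  Its entire extension satisfies
`|P(z)| ≤ ((1-x+M)/(1-x-M))^{|∂S|} · P(x+M)` on the closed disk `D(x,M)`,
for every `M > 0` and `0 ≤ x < 1` with `x + M < 1`. -/
theorem cluster_eq_subgraph_prob_complex_bound
    {V : Type*} (G : SimpleGraph V) (S : G.Subgraph) (o : V) (ho : o ∈ S.verts)
    (hEfin : S.edgeSet.Finite)
    (boundary : Set (Sym2 V))
    (hboundary : boundary =
      {e ∈ G.edgeSet | (∃ v ∈ S.verts, v ∈ e) ∧ e ∉ S.edgeSet})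
    (hBfin : boundary.Finite)
    (P : ℂ → ℂ)
    (hP : P = fun z : ℂ => z ^ S.edgeSet.ncard * (1 - z) ^ boundary.ncard)
    (M x : ℝ) (hM : 0 < M) (hx0 : 0 ≤ x) (hx1 : x < 1) (hxM : x + M < 1) :
    ∀ z ∈ Metric.closedBall (x : ℂ) M,
      ‖P z‖ ≤
        ((1 - x + M) / (1 - x - M)) ^ boundary.ncard *
          ((x + M) ^ S.edgeSet.ncard * (1 - (x + M)) ^ boundary.ncard) := by
  intro z hz
  subst hP
  have hd : ‖z - (x : ℂ)‖ ≤ M := by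
    simpa [Complex.dist_eq] using (Metric.mem_closedBall.mp hz)
  have hne : (1 : ℝ) - x - M ≠ 0 := by linarith
  have h1 : ‖z‖ ≤ x + M := by
    calc ‖z‖ = ‖(x : ℂ) + (z - x)‖ := by ring_nf
    _ ≤ ‖(x : ℂ)‖ + ‖z - x‖ := norm_add_le _ _
    _ ≤ x + M := by
        have : ‖(x : ℂ)‖ = x := by
          rw [Complex.norm_real, Real.norm_eq_abs, abs_of_nonneg hx0]
        linarith
  have h2 : ‖1 - z‖ ≤ 1 - x + M := by
    calc ‖1 - z‖ = ‖(1 - (x : ℂ)) + (x - z)‖ := by ring_nf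
    _ ≤ ‖1 - (x : ℂ)‖ + ‖(x : ℂ) - z‖ := norm_add_le _ _
    _ ≤ (1 - x) + M := by
        have : ‖1 - (x : ℂ)‖ = 1 - x := by
          rw [show (1 : ℂ) - x = ((1 - x : ℝ) : ℂ) by push_cast; ring,
            Complex.norm_real, Real.norm_eq_abs, abs_of_nonneg (by linarith)]
        have h' : ‖(x : ℂ) - z‖ ≤ M := by
          rwa [← norm_neg, neg_sub]
        linarith
    _ = 1 - x + M := by ring
  have key : ((1 - x + M) / (1 - x - M)) ^ boundary.ncard *
      ((x + M) ^ S.edgeSet.ncard * (1 - (x + M)) ^ boundary.ncard)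
      = (x + M) ^ S.edgeSet.ncard * (1 - x + M) ^ boundary.ncard := by
    rw [show (1 : ℝ) - (x + M) = 1 - x - M by ring]
    rw [← mul_assoc, mul_comm (((1 - x + M) / (1 - x - M)) ^ boundary.ncard),
      mul_assoc, ← mul_pow, div_mul_cancel₀ _ hne]
  rw [key]
  simp only [norm_mul, norm_pow]
  gcongr <;> first | positivity | exact h1 | exact h2
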